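/- Let W = (Y,X) have law F₀ with Y real, let μ be the law of X, let Γ be a closed linear subspace of L²(μ) containing constants, and let γ₀ ∈ Γ satisfy E[ν(X)(Y − γ₀(X))] = 0 for all ν ∈ Γ. Write ε = Y − γ₀(X), μ̄ = E[Y] (= E[γ₀(X)]), θ₀ = Var(γ₀(X)), and assume γ₀(X) ∈ L⁴, E[(γ₀(X)−μ̄)²ε²] < ∞ and E[|γ₀(X)−μ̄|³|ε|] < ∞. Let (W_i,W_j) be independent copies of W and define ψ(w_i,w_j) = (1/2)(γ₀(x_i) − γ₀(x_j))² − θ₀ + (γ₀(x_i) − γ₀(x_j))( (y_i − γ₀(x_i)) − (y_j − γ₀(x_j)) ). Then Σ := 4·Var( E[ψ(W_i,W_j) | W_i] ) = Var[ (γ₀(X)−μ̄)² ] + 4 E[ (γ₀(X)−μ̄)² ε² ] + 4 E[ (γ₀(X)−μ̄)³ ε ]; and if in addition E[ε | X] = 0 almost surely, then Σ = Var[ (γ₀(X)−μ̄)² ] + 4 E[ (γ₀(X)−μ̄)² ε² ]. -/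

import Mathlib

/-!
STATEMENT 18: Asymptotic variance of the debiased variance-of-fitted-values moment.
W = (Y,X) ~ F₀, Y square-integrable, γ₀ ∈ Γ with E[ν(X)(Y−γ₀(X))] = 0 for all ν ∈ Γ
(Γ a linear subspace of L²(law of X) containing constants). With ε = Y − γ₀(X),
μ̄ = E[Y] (= E[γ₀(X)]), θ₀ = Var(γ₀(X)), γ₀(X) ∈ L⁴, E[(γ₀(X)−μ̄)²ε²] < ∞,
E[|γ₀(X)−μ̄|³|ε|] < ∞, and
ψ(w_i,w_j) = ½(γ₀(x_i)−γ₀(x_j))² − θ₀ + (γ₀(x_i)−γ₀(x_j))((y_i−γ₀(x_i)) − (y_j−γ₀(x_j))),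
one has Σ := 4·Var(E[ψ(W_i,W_j)|W_i])
        = Var[(γ₀(X)−μ̄)²] + 4E[(γ₀(X)−μ̄)²ε²] + 4E[(γ₀(X)−μ̄)³ε];
if moreover E[ε|X] = 0 a.s., then Σ = Var[(γ₀(X)−μ̄)²] + 4E[(γ₀(X)−μ̄)²ε²].
E[ψ|W_i] is rendered as the integral w ↦ ∫ ψ(w,w') F₀(dw'), Var f = E[(f − E f)²].
-/

open MeasureTheory
open scoped ENNReal

lemma aux_L2_mul_integrable {α : Type*} [MeasurableSpace α] {μ : Measure α}
    {f g : α → ℝ} (hf : MemLp f 2 μ) (hg : MemLp g 2 μ) :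
    Integrable (fun a => f a * g a) μ := by
  have h := hg.smul hf (r := 1)
  rw [memLp_one_iff_integrable] at h
  exact h.congr (Filter.Eventually.of_forall fun a => by simp [smul_eq_mul])

lemma aux_L4_sq {α : Type*} [MeasurableSpace α] {μ : Measure α}
    {f : α → ℝ} (hf : MemLp f 4 μ) : MemLp (fun a => f a ^ 2) 2 μ := by
  have h := hf.smul hf (r := 2) (hpqr := ⟨by
    rw [← two_mul, show (4:ℝ≥0∞) = 2*2 by norm_num,
      ENNReal.mul_inv (Or.inl (by norm_num)) (Or.inl (by norm_num)), ← mul_assoc,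
      ENNReal.mul_inv_cancel (by norm_num) (by norm_num), one_mul]⟩)
  exact (memLp_congr_ae (Filter.Eventually.of_forall fun a => by simp [smul_eq_mul, sq])).mp h


theorem asymptotic_variance_debiased_variance_of_fitted_values
    {𝒳 : Type*} [MeasurableSpace 𝒳]
    (F₀ : Measure (ℝ × 𝒳)) [IsProbabilityMeasure F₀]
    (Γ : Set (𝒳 → ℝ))
    (hΓ_const : ∀ c : ℝ, (fun _ => c) ∈ Γ)
    (hΓ_add : ∀ f ∈ Γ, ∀ g ∈ Γ, (fun x => f x + g x) ∈ Γ)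
    (hΓ_smul : ∀ (c : ℝ), ∀ f ∈ Γ, (fun x => c * f x) ∈ Γ)
    (γ₀ : 𝒳 → ℝ) (hγ₀meas : Measurable γ₀) (hγ₀Γ : γ₀ ∈ Γ)
    (horth : ∀ ν ∈ Γ, (∫ w : ℝ × 𝒳, ν w.2 * (w.1 - γ₀ w.2) ∂F₀) = 0)
    (hY_L2 : MemLp (fun w : ℝ × 𝒳 => w.1) 2 F₀)
    (hγ₀_L4 : MemLp (fun w : ℝ × 𝒳 => γ₀ w.2) 4 F₀)
    (μbar θ₀ : ℝ)
    (hμbar : μbar = ∫ w : ℝ × 𝒳, w.1 ∂F₀)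
    (hθ₀ : θ₀ = ∫ w : ℝ × 𝒳, (γ₀ w.2 - ∫ v : ℝ × 𝒳, γ₀ v.2 ∂F₀) ^ 2 ∂F₀)
    (hmom₁ : Integrable
      (fun w : ℝ × 𝒳 => (γ₀ w.2 - μbar) ^ 2 * (w.1 - γ₀ w.2) ^ 2) F₀)
    (hmom₂ : Integrable
      (fun w : ℝ × 𝒳 => |γ₀ w.2 - μbar| ^ 3 * |w.1 - γ₀ w.2|) F₀)
    (ψ : (ℝ × 𝒳) → (ℝ × 𝒳) → ℝ)
    (hψ : ∀ w w' : ℝ × 𝒳,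
      ψ w w' = (1/2) * (γ₀ w.2 - γ₀ w'.2) ^ 2 - θ₀
        + (γ₀ w.2 - γ₀ w'.2) * ((w.1 - γ₀ w.2) - (w'.1 - γ₀ w'.2)))
    (Sig : ℝ)
    (hSig : Sig = 4 * ∫ w : ℝ × 𝒳,
      ((∫ w', ψ w w' ∂F₀) - ∫ v : ℝ × 𝒳, (∫ w', ψ v w' ∂F₀) ∂F₀) ^ 2 ∂F₀) :
    Sig = (∫ w : ℝ × 𝒳,
          ((γ₀ w.2 - μbar) ^ 2 - ∫ v : ℝ × 𝒳, (γ₀ v.2 - μbar) ^ 2 ∂F₀) ^ 2 ∂F₀)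
        + 4 * (∫ w : ℝ × 𝒳, (γ₀ w.2 - μbar) ^ 2 * (w.1 - γ₀ w.2) ^ 2 ∂F₀)
        + 4 * (∫ w : ℝ × 𝒳, (γ₀ w.2 - μbar) ^ 3 * (w.1 - γ₀ w.2) ∂F₀)
    ∧ ((F₀[(fun w : ℝ × 𝒳 => w.1 - γ₀ w.2) |
          MeasurableSpace.comap Prod.snd inferInstance] =ᵐ[F₀] 0) →
        Sig = (∫ w : ℝ × 𝒳,
              ((γ₀ w.2 - μbar) ^ 2 - ∫ v : ℝ × 𝒳, (γ₀ v.2 - μbar) ^ 2 ∂F₀) ^ 2 ∂F₀)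
            + 4 * (∫ w : ℝ × 𝒳, (γ₀ w.2 - μbar) ^ 2 * (w.1 - γ₀ w.2) ^ 2 ∂F₀)) := by
  
  have hmS : Measurable (fun w : ℝ × 𝒳 => γ₀ w.2) := hγ₀meas.comp measurable_snd
  have hG2 : MemLp (fun w : ℝ × 𝒳 => γ₀ w.2) 2 F₀ :=
    hγ₀_L4.mono_exponent (by norm_num)
  have hGc4 : MemLp (fun w : ℝ × 𝒳 => γ₀ w.2 - μbar) 4 F₀ :=
    hγ₀_L4.sub (memLp_const μbar)
  have hGc2 : MemLp (fun w : ℝ × 𝒳 => γ₀ w.2 - μbar) 2 F₀ :=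
    hGc4.mono_exponent (by norm_num)
  have hε2 : MemLp (fun w : ℝ × 𝒳 => w.1 - γ₀ w.2) 2 F₀ := hY_L2.sub hG2
  have hQ2 : MemLp (fun w : ℝ × 𝒳 => (γ₀ w.2 - μbar) ^ 2) 2 F₀ := aux_L4_sq hGc4
  have hq2 : MemLp (fun w : ℝ × 𝒳 => (γ₀ w.2 - μbar) ^ 2 - θ₀) 2 F₀ :=
    hQ2.sub (memLp_const θ₀)
  have iY : Integrable (fun w : ℝ × 𝒳 => w.1) F₀ := hY_L2.integrable one_le_two
  have iG : Integrable (fun w : ℝ × 𝒳 => γ₀ w.2) F₀ := hG2.integrable one_le_two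
  have iε : Integrable (fun w : ℝ × 𝒳 => w.1 - γ₀ w.2) F₀ := hε2.integrable one_le_two
  have iGε : Integrable (fun w : ℝ × 𝒳 => γ₀ w.2 * (w.1 - γ₀ w.2)) F₀ :=
    aux_L2_mul_integrable hG2 hε2
  have iGcε : Integrable (fun w : ℝ × 𝒳 => (γ₀ w.2 - μbar) * (w.1 - γ₀ w.2)) F₀ :=
    aux_L2_mul_integrable hGc2 hε2
  have iQ : Integrable (fun w : ℝ × 𝒳 => (γ₀ w.2 - μbar) ^ 2) F₀ :=
    hQ2.integrable one_le_two
  have iq2 : Integrable (fun w : ℝ × 𝒳 => ((γ₀ w.2 - μbar) ^ 2 - θ₀) ^ 2) F₀ := by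
    have := aux_L2_mul_integrable hq2 hq2
    exact this.congr (Filter.Eventually.of_forall fun w => by ring)
  have i3 : Integrable (fun w : ℝ × 𝒳 => (γ₀ w.2 - μbar) ^ 3 * (w.1 - γ₀ w.2)) F₀ := by
    refine hmom₂.mono' ?_ (Filter.Eventually.of_forall fun w => ?_)
    · exact (((hmS.sub measurable_const).pow_const 3).mul
        (measurable_fst.sub hmS)).aestronglyMeasurable
    · rw [Real.norm_eq_abs, abs_mul, abs_pow]
  -- basic integral identities
  have hεint : ∫ w : ℝ × 𝒳, (w.1 - γ₀ w.2) ∂F₀ = 0 := by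
    have := horth (fun _ => 1) (hΓ_const 1)
    simpa using this
  have hGε : ∫ w : ℝ × 𝒳, γ₀ w.2 * (w.1 - γ₀ w.2) ∂F₀ = 0 := horth γ₀ hγ₀Γ
  have hGint : ∫ w : ℝ × 𝒳, γ₀ w.2 ∂F₀ = μbar := by
    rw [integral_sub iY iG, ← hμbar] at hεint
    linarith
  have hθ : θ₀ = ∫ w : ℝ × 𝒳, (γ₀ w.2 - μbar) ^ 2 ∂F₀ := by rw [hθ₀, hGint]
  have hGcε : ∫ w : ℝ × 𝒳, (γ₀ w.2 - μbar) * (w.1 - γ₀ w.2) ∂F₀ = 0 := by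
    have hfe : (fun w : ℝ × 𝒳 => (γ₀ w.2 - μbar) * (w.1 - γ₀ w.2))
        = fun w : ℝ × 𝒳 => γ₀ w.2 * (w.1 - γ₀ w.2) - μbar * (w.1 - γ₀ w.2) := by
      funext w; ring
    rw [hfe, integral_sub iGε (iε.const_mul _), hGε, integral_const_mul, hεint]
    ring
  -- the inner conditional mean
  have hinner : ∀ w : ℝ × 𝒳, (∫ w', ψ w w' ∂F₀)
      = (1/2) * ((γ₀ w.2 - μbar) ^ 2 - θ₀) + (γ₀ w.2 - μbar) * (w.1 - γ₀ w.2) := by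
    intro w
    have iA : Integrable (fun w' : ℝ × 𝒳 =>
        (-(γ₀ w.2) - (w.1 - γ₀ w.2) + μbar) * γ₀ w'.2) F₀ := iG.const_mul _
    have iB : Integrable (fun w' : ℝ × 𝒳 => (1/2) * (γ₀ w'.2 - μbar) ^ 2) F₀ :=
      iQ.const_mul _
    have iC : Integrable (fun w' : ℝ × 𝒳 => (-(γ₀ w.2)) * (w'.1 - γ₀ w'.2)) F₀ :=
      iε.const_mul _
    have iD : Integrable (fun w' : ℝ × 𝒳 => γ₀ w'.2 * (w'.1 - γ₀ w'.2)) F₀ := iGε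
    have iCD : Integrable (fun w' : ℝ × 𝒳 =>
        (-(γ₀ w.2)) * (w'.1 - γ₀ w'.2) + γ₀ w'.2 * (w'.1 - γ₀ w'.2)) F₀ := iC.add iD
    have iBCD : Integrable (fun w' : ℝ × 𝒳 => (1/2) * (γ₀ w'.2 - μbar) ^ 2
        + ((-(γ₀ w.2)) * (w'.1 - γ₀ w'.2) + γ₀ w'.2 * (w'.1 - γ₀ w'.2))) F₀ := iB.add iCD
    have iABCD : Integrable (fun w' : ℝ × 𝒳 =>
        (-(γ₀ w.2) - (w.1 - γ₀ w.2) + μbar) * γ₀ w'.2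
        + ((1/2) * (γ₀ w'.2 - μbar) ^ 2
          + ((-(γ₀ w.2)) * (w'.1 - γ₀ w'.2) + γ₀ w'.2 * (w'.1 - γ₀ w'.2)))) F₀ :=
      iA.add iBCD
    have hfe : (fun w' : ℝ × 𝒳 => ψ w w') = fun w' : ℝ × 𝒳 =>
        ((1/2) * γ₀ w.2 ^ 2 - θ₀ + γ₀ w.2 * (w.1 - γ₀ w.2) - (1/2) * μbar ^ 2)
        + ((-(γ₀ w.2) - (w.1 - γ₀ w.2) + μbar) * γ₀ w'.2
          + ((1/2) * (γ₀ w'.2 - μbar) ^ 2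
            + ((-(γ₀ w.2)) * (w'.1 - γ₀ w'.2) + γ₀ w'.2 * (w'.1 - γ₀ w'.2)))) := by
      funext w'; rw [hψ]; ring
    rw [hfe, integral_add (integrable_const _) iABCD, integral_add iA iBCD,
      integral_add iB iCD, integral_add iC iD,
      integral_const_mul, integral_const_mul, integral_const_mul,
      hGint, ← hθ, hεint, hGε, integral_const, probReal_univ]
    simp only [ENNReal.toReal_one, smul_eq_mul, one_mul]
    ring
  -- mean of the inner conditional mean is zero
  have hIm : ∫ v : ℝ × 𝒳, ((1/2) * ((γ₀ v.2 - μbar) ^ 2 - θ₀)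
      + (γ₀ v.2 - μbar) * (v.1 - γ₀ v.2)) ∂F₀ = 0 := by
    have iE : Integrable (fun v : ℝ × 𝒳 => (1/2) * ((γ₀ v.2 - μbar) ^ 2 - θ₀)) F₀ :=
      (iQ.sub (integrable_const _)).const_mul _
    rw [integral_add iE iGcε, integral_const_mul,
      integral_sub iQ (integrable_const _), ← hθ, integral_const, probReal_univ, hGcε]
    simp
  -- main identity
  have hmain : Sig = (∫ w : ℝ × 𝒳,
        ((γ₀ w.2 - μbar) ^ 2 - ∫ v : ℝ × 𝒳, (γ₀ v.2 - μbar) ^ 2 ∂F₀) ^ 2 ∂F₀)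
      + 4 * (∫ w : ℝ × 𝒳, (γ₀ w.2 - μbar) ^ 2 * (w.1 - γ₀ w.2) ^ 2 ∂F₀)
      + 4 * (∫ w : ℝ × 𝒳, (γ₀ w.2 - μbar) ^ 3 * (w.1 - γ₀ w.2) ∂F₀) := by
    rw [hSig]
    simp only [hinner, hIm, sub_zero, ← hθ]
    have iP : Integrable (fun w : ℝ × 𝒳 =>
        (1/4) * ((γ₀ w.2 - μbar) ^ 2 - θ₀) ^ 2) F₀ := iq2.const_mul _
    have iR : Integrable (fun w : ℝ × 𝒳 => (γ₀ w.2 - μbar) ^ 3 * (w.1 - γ₀ w.2)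
        - θ₀ * ((γ₀ w.2 - μbar) * (w.1 - γ₀ w.2))) F₀ := i3.sub (iGcε.const_mul _)
    have iPR : Integrable (fun w : ℝ × 𝒳 =>
        (1/4) * ((γ₀ w.2 - μbar) ^ 2 - θ₀) ^ 2
        + ((γ₀ w.2 - μbar) ^ 3 * (w.1 - γ₀ w.2)
          - θ₀ * ((γ₀ w.2 - μbar) * (w.1 - γ₀ w.2)))) F₀ := iP.add iR
    have hexp : (fun w : ℝ × 𝒳 => ((1/2) * ((γ₀ w.2 - μbar) ^ 2 - θ₀)
        + (γ₀ w.2 - μbar) * (w.1 - γ₀ w.2)) ^ 2)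
        = fun w : ℝ × 𝒳 => ((1/4) * ((γ₀ w.2 - μbar) ^ 2 - θ₀) ^ 2
          + ((γ₀ w.2 - μbar) ^ 3 * (w.1 - γ₀ w.2)
            - θ₀ * ((γ₀ w.2 - μbar) * (w.1 - γ₀ w.2))))
          + (γ₀ w.2 - μbar) ^ 2 * (w.1 - γ₀ w.2) ^ 2 := by
      funext w; ring
    rw [hexp, integral_add iPR hmom₁, integral_add iP iR,
      integral_sub i3 (iGcε.const_mul _), integral_const_mul, integral_const_mul, hGcε]
    ring
  refine ⟨hmain, fun hc => ?_⟩
  have hm : MeasurableSpace.comap (Prod.snd : ℝ × 𝒳 → 𝒳) inferInstance ≤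
      (inferInstance : MeasurableSpace (ℝ × 𝒳)) := measurable_snd.comap_le
  have hfsm : StronglyMeasurable[MeasurableSpace.comap (Prod.snd : ℝ × 𝒳 → 𝒳) inferInstance]
      (fun w : ℝ × 𝒳 => (γ₀ w.2 - μbar) ^ 3) :=
    (((hγ₀meas.comp (comap_measurable Prod.snd)).sub measurable_const).pow_const
      3).stronglyMeasurable
  have hfg : Integrable ((fun w : ℝ × 𝒳 => (γ₀ w.2 - μbar) ^ 3)
      * fun w : ℝ × 𝒳 => w.1 - γ₀ w.2) F₀ := i3
  have hpull := condExp_mul_of_stronglyMeasurable_left hfsm hfg iε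
  have hzero : F₀[((fun w : ℝ × 𝒳 => (γ₀ w.2 - μbar) ^ 3)
      * fun w : ℝ × 𝒳 => w.1 - γ₀ w.2) |
      MeasurableSpace.comap Prod.snd inferInstance] =ᵐ[F₀] 0 := by
    refine hpull.trans ?_
    filter_upwards [hc] with w hw
    simp [hw]
  have hcube : ∫ w : ℝ × 𝒳, (γ₀ w.2 - μbar) ^ 3 * (w.1 - γ₀ w.2) ∂F₀ = 0 := by
    have h1 : ∫ w : ℝ × 𝒳, (γ₀ w.2 - μbar) ^ 3 * (w.1 - γ₀ w.2) ∂F₀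
        = ∫ w, (F₀[((fun w : ℝ × 𝒳 => (γ₀ w.2 - μbar) ^ 3)
          * fun w : ℝ × 𝒳 => w.1 - γ₀ w.2) |
          MeasurableSpace.comap Prod.snd inferInstance]) w ∂F₀ :=
      (integral_condExp hm).symm
    rw [h1, integral_congr_ae hzero]
    simp
  rw [hmain, hcube]
  ring
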